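/- In the complete-mediator setup, assuming ℙ(E=1) > 0, ℙ(E=0) > 0, ℙ(R = 1 ∣ E = 1) > 0 and ℙ(R = 1 ∣ E = 0) > 0, the probability of causation satisfies the lower bound PC ≥ max(0, 1 − ℙ(R = 1 ∣ E = 0)/ℙ(R = 1 ∣ E = 1)). -/

import Mathlib

open MeasureTheory ProbabilityTheory

/-- **Lower bound on the probability of causation in the complete-mediator setup.**
`E` is the binary exposure, `M₀, M₁` the binary potential mediator values under
`E = 0, 1`, and `R₀, R₁` the binary potential response values under `M = 0, 1`; the
three blocks `E`, `(M₀, M₁)`, `(R₀, R₁)` are mutually independent.  The observed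
mediator is `M = M₁` on `{E = 1}` and `M = M₀` on `{E = 0}`; the observed response is
`R = R₁` on `{M = 1}` and `R = R₀` on `{M = 0}`.  The potential response to exposure
`e` is `R(e) = R₁` on `{Mₑ = 1}` and `R₀` on `{Mₑ = 0}` (here `Rp0 = R(0)`,
`Rp1 = R(1)`), and the probability of causation is `PC = ℙ(R(0) = 0 ∣ E = 1, R(1) = 1)`.
Assuming `ℙ(E=1) > 0`, `ℙ(E=0) > 0`, `ℙ(R=1 ∣ E=1) > 0` and `ℙ(R=1 ∣ E=0) > 0`,
`PC ≥ max 0 (1 - ℙ(R=1 ∣ E=0) / ℙ(R=1 ∣ E=1))`. -/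
theorem mediator_pc_lower_bound
    {Ω : Type*} [MeasurableSpace Ω] (μ : Measure Ω) [IsProbabilityMeasure μ]
    (E M₀ M₁ R₀ R₁ M R Rp0 Rp1 : Ω → Bool)
    (hEmeas : Measurable E) (hM₀meas : Measurable M₀) (hM₁meas : Measurable M₁)
    (hR₀meas : Measurable R₀) (hR₁meas : Measurable R₁)
    (hindep : ∀ (a : Set Bool) (b c : Set (Bool × Bool)),
      μ (E ⁻¹' a ∩ (fun ω => (M₀ ω, M₁ ω)) ⁻¹' b ∩ (fun ω => (R₀ ω, R₁ ω)) ⁻¹' c) =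
        μ (E ⁻¹' a) * μ ((fun ω => (M₀ ω, M₁ ω)) ⁻¹' b) *
          μ ((fun ω => (R₀ ω, R₁ ω)) ⁻¹' c))
    (hM : M = fun ω => if E ω then M₁ ω else M₀ ω)
    (hR : R = fun ω => if M ω then R₁ ω else R₀ ω)
    (hRp0 : Rp0 = fun ω => if M₀ ω then R₁ ω else R₀ ω)
    (hRp1 : Rp1 = fun ω => if M₁ ω then R₁ ω else R₀ ω)
    (hpos1 : 0 < μ {ω | E ω = true}) (hpos0 : 0 < μ {ω | E ω = false})
    (p₁ p₀ : ℝ)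
    (hp₁ : p₁ = (μ[|{ω | E ω = true}] {ω | R ω = true}).toReal)
    (hp₀ : p₀ = (μ[|{ω | E ω = false}] {ω | R ω = true}).toReal)
    (hp₁pos : 0 < p₁) (hp₀pos : 0 < p₀)
    (PC : ℝ)
    (hPC : PC = (μ[|{ω | E ω = true ∧ Rp1 ω = true}] {ω | Rp0 ω = false}).toReal) :
    PC ≥ max 0 (1 - p₀ / p₁) := by
  classical
  set f : Ω → (Bool × Bool) × (Bool × Bool) :=
    fun ω => ((M₀ ω, M₁ ω), (R₀ ω, R₁ ω)) with hfdef
  have hfmeas : Measurable f :=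
    (hM₀meas.prodMk hM₁meas).prodMk (hR₀meas.prodMk hR₁meas)
  have hma : ∀ a : Set Bool, MeasurableSet a := fun a => a.to_countable.measurableSet
  have hmS : ∀ S : Set ((Bool × Bool) × (Bool × Bool)), MeasurableSet S :=
    fun S => S.to_countable.measurableSet
  -- singleton version of independence
  have single : ∀ (a : Set Bool) (p : (Bool × Bool) × (Bool × Bool)),
      μ (E ⁻¹' a ∩ f ⁻¹' {p}) = μ (E ⁻¹' a) * μ (f ⁻¹' {p}) := by
    intro a p
    have h1 : f ⁻¹' {p} =
        (fun ω => (M₀ ω, M₁ ω)) ⁻¹' {p.1} ∩ (fun ω => (R₀ ω, R₁ ω)) ⁻¹' {p.2} := by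
      ext ω; simp [hfdef, Prod.ext_iff]
    have h2 := hindep a {p.1} {p.2}
    have h3 := hindep Set.univ {p.1} {p.2}
    simp only [Set.preimage_univ, Set.univ_inter, measure_univ, one_mul] at h3
    rw [h1, ← Set.inter_assoc, h2, h3, mul_assoc]
  -- general version
  have key : ∀ (a : Set Bool) (S : Set ((Bool × Bool) × (Bool × Bool))),
      μ (E ⁻¹' a ∩ f ⁻¹' S) = μ (E ⁻¹' a) * μ (f ⁻¹' S) := by
    intro a S
    set T : Finset ((Bool × Bool) × (Bool × Bool)) := (Set.toFinite S).toFinset with hT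
    have hdecomp : f ⁻¹' S = ⋃ p ∈ T, f ⁻¹' {p} := by
      ext ω
      simp only [Set.mem_preimage, Set.mem_iUnion, Set.mem_singleton_iff,
        Set.Finite.mem_toFinset, hT, exists_prop]
      constructor
      · intro h; exact ⟨f ω, h, rfl⟩
      · rintro ⟨p, hp, hfp⟩; rwa [hfp]
    have hdisj : (↑T : Set ((Bool × Bool) × (Bool × Bool))).PairwiseDisjoint
        (fun p => f ⁻¹' {p}) := by
      intro p _ q _ hpq
      refine Set.disjoint_left.2 fun ω h1 h2 => hpq ?_
      simp only [Set.mem_preimage, Set.mem_singleton_iff] at h1 h2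
      exact h1.symm.trans h2
    have hdisj' : (↑T : Set ((Bool × Bool) × (Bool × Bool))).PairwiseDisjoint
        (fun p => E ⁻¹' a ∩ f ⁻¹' {p}) := fun p hp q hq hpq =>
      (hdisj hp hq hpq).mono Set.inter_subset_right Set.inter_subset_right
    have hmeas1 : ∀ p ∈ T, MeasurableSet (f ⁻¹' ({p} : Set _)) :=
      fun p _ => hfmeas (hmS _)
    have hmeas2 : ∀ p ∈ T, MeasurableSet (E ⁻¹' a ∩ f ⁻¹' ({p} : Set _)) :=
      fun p _ => (hEmeas (hma a)).inter (hfmeas (hmS _))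
    calc μ (E ⁻¹' a ∩ f ⁻¹' S)
        = μ (⋃ p ∈ T, E ⁻¹' a ∩ f ⁻¹' {p}) := by rw [hdecomp, Set.inter_iUnion₂]
      _ = ∑ p ∈ T, μ (E ⁻¹' a ∩ f ⁻¹' {p}) := measure_biUnion_finset hdisj' hmeas2
      _ = ∑ p ∈ T, μ (E ⁻¹' a) * μ (f ⁻¹' {p}) :=
          Finset.sum_congr rfl fun p _ => single a p
      _ = μ (E ⁻¹' a) * ∑ p ∈ T, μ (f ⁻¹' {p}) := (Finset.mul_sum _ _ _).symm
      _ = μ (E ⁻¹' a) * μ (f ⁻¹' S) := by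
          rw [hdecomp, measure_biUnion_finset hdisj hmeas1]
  -- the relevant target sets
  set S1 : Set ((Bool × Bool) × (Bool × Bool)) :=
    {p | (if p.1.2 then p.2.2 else p.2.1) = true} with hS1
  set S0 : Set ((Bool × Bool) × (Bool × Bool)) :=
    {p | (if p.1.1 then p.2.2 else p.2.1) = true} with hS0
  set S0' : Set ((Bool × Bool) × (Bool × Bool)) :=
    {p | (if p.1.1 then p.2.2 else p.2.1) = false} with hS0'
  -- basic measure facts
  have hE1ne : μ (E ⁻¹' {true}) ≠ 0 := by
    have : {ω | E ω = true} = E ⁻¹' {true} := rfl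
    rw [← this]; exact hpos1.ne'
  have hE0ne : μ (E ⁻¹' {false}) ≠ 0 := by
    have : {ω | E ω = false} = E ⁻¹' {false} := rfl
    rw [← this]; exact hpos0.ne'
  have hfin : ∀ s : Set Ω, μ s ≠ ⊤ := fun s => measure_ne_top μ s
  -- p₁ = μ (f ⁻¹' S1)
  have hRE1 : (E ⁻¹' {true} : Set Ω) ∩ {ω | R ω = true} = E ⁻¹' {true} ∩ f ⁻¹' S1 := by
    ext ω
    simp only [Set.mem_inter_iff, Set.mem_preimage, Set.mem_singleton_iff,
      Set.mem_setOf_eq, hR, hM, hS1, hfdef]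
    by_cases h : E ω = true <;> simp [h]
  have hp₁' : p₁ = (μ (f ⁻¹' S1)).toReal := by
    rw [hp₁]
    have : μ[|{ω | E ω = true}] {ω | R ω = true}
        = (μ (E ⁻¹' {true}))⁻¹ * μ ((E ⁻¹' {true}) ∩ {ω | R ω = true}) :=
      cond_apply (hEmeas (hma {true})) μ _
    rw [this, hRE1, key {true} S1, ← mul_assoc,
      ENNReal.inv_mul_cancel hE1ne (hfin _), one_mul]
  -- p₀ = μ (f ⁻¹' S0)
  have hRE0 : (E ⁻¹' {false} : Set Ω) ∩ {ω | R ω = true} = E ⁻¹' {false} ∩ f ⁻¹' S0 := by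
    ext ω
    simp only [Set.mem_inter_iff, Set.mem_preimage, Set.mem_singleton_iff,
      Set.mem_setOf_eq, hR, hM, hS0, hfdef]
    by_cases h : E ω = true <;> simp [h]
  have hp₀' : p₀ = (μ (f ⁻¹' S0)).toReal := by
    rw [hp₀]
    have : μ[|{ω | E ω = false}] {ω | R ω = true}
        = (μ (E ⁻¹' {false}))⁻¹ * μ ((E ⁻¹' {false}) ∩ {ω | R ω = true}) :=
      cond_apply (hEmeas (hma {false})) μ _
    rw [this, hRE0, key {false} S0, ← mul_assoc,
      ENNReal.inv_mul_cancel hE0ne (hfin _), one_mul]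
  -- PC
  have hC : {ω | E ω = true ∧ Rp1 ω = true} = E ⁻¹' {true} ∩ f ⁻¹' S1 := by
    ext ω
    simp [hRp1, hS1, hfdef]
  have hCD : (E ⁻¹' {true} ∩ f ⁻¹' S1) ∩ {ω | Rp0 ω = false}
      = E ⁻¹' {true} ∩ f ⁻¹' (S1 ∩ S0') := by
    ext ω
    simp only [Set.mem_inter_iff, Set.mem_preimage, Set.mem_singleton_iff,
      Set.mem_setOf_eq, hRp0, hS1, hS0', hfdef]
    tauto
  have hPC' : PC = ((μ (E ⁻¹' {true}) * μ (f ⁻¹' S1))⁻¹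
      * (μ (E ⁻¹' {true}) * μ (f ⁻¹' (S1 ∩ S0')))).toReal := by
    rw [hPC]
    have hmc : MeasurableSet {ω | E ω = true ∧ Rp1 ω = true} := by
      rw [hC]; exact (hEmeas (hma _)).inter (hfmeas (hmS _))
    rw [cond_apply hmc μ, hC, hCD, key {true} (S1 ∩ S0'), key {true} S1]
  -- real numbers
  set e1 : ℝ := (μ (E ⁻¹' {true})).toReal with he1
  set α : ℝ := (μ (f ⁻¹' S1)).toReal with hα
  set β : ℝ := (μ (f ⁻¹' S0)).toReal with hβ
  set δ : ℝ := (μ (f ⁻¹' (S1 ∩ S0'))).toReal with hδ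
  have he1pos : 0 < e1 := ENNReal.toReal_pos hE1ne (hfin _)
  have hαpos : 0 < α := hp₁' ▸ hp₁pos
  have hδnonneg : 0 ≤ δ := ENNReal.toReal_nonneg
  have hβnonneg : 0 ≤ β := ENNReal.toReal_nonneg
  have hPCval : PC = δ / α := by
    rw [hPC', ENNReal.toReal_mul, ENNReal.toReal_inv, ENNReal.toReal_mul,
      ENNReal.toReal_mul, ← he1, ← hα, ← hδ]
    field_simp
  -- key inequality : α ≤ δ + β
  have hsub : f ⁻¹' S1 ⊆ f ⁻¹' (S1 ∩ S0') ∪ f ⁻¹' S0 := by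
    intro ω hω
    simp only [Set.mem_union, Set.mem_preimage, Set.mem_inter_iff, hS0, hS0',
      Set.mem_setOf_eq] at hω ⊢
    rcases Bool.eq_false_or_eq_true (if M₀ ω = true then R₁ ω else R₀ ω) with h | h
    · exact Or.inr h
    · exact Or.inl ⟨hω, h⟩
  have hineq : α ≤ δ + β := by
    have h1 : μ (f ⁻¹' S1) ≤ μ (f ⁻¹' (S1 ∩ S0')) + μ (f ⁻¹' S0) :=
      (measure_mono hsub).trans (measure_union_le _ _)
    have h2 : (μ (f ⁻¹' S1)).toReal
        ≤ (μ (f ⁻¹' (S1 ∩ S0')) + μ (f ⁻¹' S0)).toReal :=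
      ENNReal.toReal_mono (by finiteness) h1
    rwa [ENNReal.toReal_add (hfin _) (hfin _)] at h2
  -- conclude
  rw [hPCval, hp₀', hp₁', ge_iff_le, max_le_iff]
  refine ⟨by positivity, ?_⟩
  rw [sub_le_iff_le_add, ← add_div, le_div_iff₀ hαpos, one_mul]
  exact hineq
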